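/- For every positive integer d, there exist three d-degenerate graphs G_1, G_2, G_3 on a common set of 5d vertices such that G_1 ∪ G_2 ∪ G_3 is the complete graph K_{5d}. -/

import Mathlib

open SimpleGraph

/-- A coloring is proper for a graph if adjacent vertices get different colors. -/
def ProperColoring {V α : Type*} (H : SimpleGraph V) (c : V → α) : Prop :=
  ∀ u v, H.Adj u v → c u ≠ c v

/-- Two colorings are compatible for two consecutive snapshots if, for every edge of
either snapshot, the first coloring of one endpoint differs from the second coloring
of the other endpoint. -/
def Compatible {V α : Type*} (G G' : SimpleGraph V) (c c' : V → α) : Prop :=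
  ∀ u v, (G ⊔ G').Adj u v → c u ≠ c' v

/-- The union of the snapshots at times `i-1`, `i`, `i+1` (those that exist, with
snapshots indexed by `1,…,T`). -/
def Smash {V : Type*} (G : ℕ → SimpleGraph V) (T i : ℕ) : SimpleGraph V :=
  (if 2 ≤ i then G (i - 1) else ⊥) ⊔ G i ⊔ (if i < T then G (i + 1) else ⊥)

/-- A temporal coloring of a temporal graph with snapshots `G 1, …, G T`. -/
def TemporalColoring {V α : Type*} (T : ℕ) (G : ℕ → SimpleGraph V) (c : ℕ → V → α) : Prop :=
  (∀ i, 1 ≤ i → i ≤ T → ProperColoring (Smash G T i) (c i)) ∧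
  (∀ i, 1 ≤ i → i < T → Compatible (G i) (G (i + 1)) (c i) (c (i + 1)))

/-- The temporal chromatic number: the least `k` admitting a temporal `k`-coloring. -/
noncomputable def temporalChromaticNumber {V : Type*} (T : ℕ) (G : ℕ → SimpleGraph V) : ℕ :=
  sInf {k | ∃ c : ℕ → V → Fin k, TemporalColoring T G c}

/-- A graph is `d`-degenerate if every nonempty (finite) subgraph has a vertex of
degree at most `d`. -/
def Degenerate {V : Type*} (H : SimpleGraph V) (d : ℕ) : Prop :=
  ∀ s : Finset V, s.Nonempty → ∃ v ∈ s, ({u | u ∈ s ∧ H.Adj v u} : Set V).ncard ≤ d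

/-- A graph is `Δ`-bounded if every vertex has degree at most `Δ`. -/
def DegLE {V : Type*} (H : SimpleGraph V) (Δ : ℕ) : Prop :=
  ∀ v, (H.neighborSet v).ncard ≤ Δ

/-- blocks graph -/
def BG (d : ℕ) (R : ℕ → ℕ → Prop) : SimpleGraph (Fin (5 * d)) where
  Adj u v := u ≠ v ∧ (R (u.val / d) (v.val / d) ∨ R (v.val / d) (u.val / d))
  symm := by constructor; rintro u v ⟨h1, h2⟩; exact ⟨h1.symm, h2.symm⟩
  loopless := by constructor; rintro v ⟨h, -⟩; exact h rfl

lemma BG_adj (d : ℕ) (R : ℕ → ℕ → Prop) (u v : Fin (5 * d)) :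
    (BG d R).Adj u v ↔ u ≠ v ∧ (R (u.val / d) (v.val / d) ∨ R (v.val / d) (u.val / d)) :=
  Iff.rfl

lemma deg_of_forward {n d : ℕ} (H : SimpleGraph (Fin n)) (f : Fin n → ℕ)
    (hf : Function.Injective f)
    (hfwd : ∀ v, ∃ a, ∀ u, H.Adj v u → f v < f u → a ≤ f u ∧ f u < a + d) :
    Degenerate H d := by
  intro s hs
  obtain ⟨v, hv, hmin⟩ := s.exists_min_image f hs
  obtain ⟨a, ha⟩ := hfwd v
  refine ⟨v, hv, ?_⟩
  have hsub : {u | u ∈ s ∧ H.Adj v u} ⊆ f ⁻¹' (Set.Ico a (a + d)) := by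
    rintro u ⟨hus, hadj⟩
    have hlt : f v < f u :=
      lt_of_le_of_ne (hmin u hus) (fun h => hadj.ne (hf h))
    exact Set.mem_Ico.mpr (ha u hadj hlt)
  calc ({u | u ∈ s ∧ H.Adj v u} : Set (Fin n)).ncard
      = (f '' {u | u ∈ s ∧ H.Adj v u}).ncard := (Set.ncard_image_of_injective _ hf).symm
    _ ≤ (Set.Ico a (a + d)).ncard :=
        Set.ncard_le_ncard (by rwa [Set.image_subset_iff]) (Set.finite_Ico _ _)
    _ = d := by rw [← Finset.coe_Ico, Set.ncard_coe_finset, Nat.card_Ico]; omega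

lemma mul_step {x y d : ℕ} (h : x < y) : x * d + d ≤ y * d := by
  have h2 : (x + 1) * d ≤ y * d := Nat.mul_le_mul_right d h
  calc x * d + d = (x + 1) * d := by ring
    _ ≤ y * d := h2

lemma bg_deg (d : ℕ) (hd : 0 < d) (R : ℕ → ℕ → Prop) (ρ τ : ℕ → ℕ)
    (hρ : ∀ b c, b < 5 → c < 5 → ρ b = ρ c → b = c)
    (H1 : ∀ b c, b < 5 → c < 5 → b ≠ c → (R b c ∨ R c b) →
      (ρ c < ρ b ∨ (ρ b < ρ c ∧ c = τ b ∧ ¬ R b b))) :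
    Degenerate (BG d R) d := by
  have hblt : ∀ v : Fin (5 * d), v.val / d < 5 := fun v =>
    (Nat.div_lt_iff_lt_mul hd).mpr v.isLt
  set f : Fin (5 * d) → ℕ := fun v => ρ (v.val / d) * d + v.val % d with hfdef
  have key : ∀ u v : Fin (5 * d), u.val / d = v.val / d → u.val % d = v.val % d → u = v := by
    intro u v h1 h2
    apply Fin.ext
    have hu := Nat.div_add_mod u.val d
    have hv := Nat.div_add_mod v.val d
    rw [h1, h2] at hu
    omega
  have hf : Function.Injective f := by
    intro u v h
    simp only [hfdef] at h
    have hu5 := hblt u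
    have hv5 := hblt v
    have hum : u.val % d < d := Nat.mod_lt _ hd
    have hvm : v.val % d < d := Nat.mod_lt _ hd
    have hρeq : ρ (u.val / d) = ρ (v.val / d) := by
      rcases Nat.lt_trichotomy (ρ (u.val / d)) (ρ (v.val / d)) with hlt | he | hlt
      · have := mul_step (d := d) hlt
        omega
      · exact he
      · have := mul_step (d := d) hlt
        omega
    have hb : u.val / d = v.val / d := hρ _ _ hu5 hv5 hρeq
    rw [hb] at h
    exact key u v hb (by omega)
  apply deg_of_forward (d := d) _ f hf
  intro v
  by_cases hcl : R (v.val / d) (v.val / d)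
  · refine ⟨f v + 1, ?_⟩
    intro u hadj hlt
    obtain ⟨hne, hr⟩ := (BG_adj d R v u).mp hadj
    have hum : u.val % d < d := Nat.mod_lt _ hd
    have hvm : v.val % d < d := Nat.mod_lt _ hd
    by_cases hbu : u.val / d = v.val / d
    · simp only [hfdef] at hlt ⊢
      rw [hbu] at hlt ⊢
      omega
    · exfalso
      rcases H1 (v.val / d) (u.val / d) (hblt v) (hblt u) (fun hh => hbu hh.symm) hr with
        hlt2 | ⟨-, -, hnc⟩
      · have := mul_step (d := d) hlt2
        simp only [hfdef] at hlt
        omega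
      · exact hnc hcl
  · refine ⟨ρ (τ (v.val / d)) * d, ?_⟩
    intro u hadj hlt
    obtain ⟨hne, hr⟩ := (BG_adj d R v u).mp hadj
    have hum : u.val % d < d := Nat.mod_lt _ hd
    by_cases hbu : u.val / d = v.val / d
    · rw [hbu] at hr
      exact absurd (hr.elim id id) hcl
    · rcases H1 (v.val / d) (u.val / d) (hblt v) (hblt u) (fun hh => hbu hh.symm) hr with
        hlt2 | ⟨hlt2, hτ, -⟩
      · exfalso
        have := mul_step (d := d) hlt2
        simp only [hfdef] at hlt
        omega
      · rw [← hτ]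
        simp only [hfdef]
        omega

abbrev R1 (b c : ℕ) : Prop := b + 1 = c ∨ c + 1 = b ∨ (b = 4 ∧ c = 4)

abbrev R2 (b c : ℕ) : Prop :=
  (b = 3 ∧ c = 0) ∨ (b = 0 ∧ c = 3) ∨ (b = 0 ∧ c = 2) ∨ (b = 2 ∧ c = 0) ∨
  (b = 2 ∧ c = 4) ∨ (b = 4 ∧ c = 2) ∨ (b = 4 ∧ c = 1) ∨ (b = 1 ∧ c = 4) ∨ (b = 1 ∧ c = 1)

abbrev R3 (b c : ℕ) : Prop :=
  (b = 4 ∧ c = 0) ∨ (b = 0 ∧ c = 4) ∨ (b = 1 ∧ c = 3) ∨ (b = 3 ∧ c = 1) ∨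
  (b = c ∧ (b = 0 ∨ b = 2 ∨ b = 3))

abbrev rho2 (b : ℕ) : ℕ := if b = 0 then 1 else if b = 1 then 4 else if b = 2 then 2
  else if b = 3 then 0 else 3

abbrev tau2 (b : ℕ) : ℕ := if b = 3 then 0 else if b = 0 then 2 else if b = 2 then 4
  else if b = 4 then 1 else 0

abbrev rho3 (b : ℕ) : ℕ := if b = 4 then 0 else if b = 1 then 1 else if b = 0 then 2
  else if b = 3 then 3 else 4

abbrev tau3 (b : ℕ) : ℕ := if b = 4 then 0 else if b = 1 then 3 else 0

lemma degG1 (d : ℕ) (hd : 0 < d) : Degenerate (BG d R1) d := by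
  apply bg_deg d hd R1 (fun b => b) (fun b => b + 1)
  · intro b c _ _ h; exact h
  · intro b c hb hc hne h
    simp only [R1] at *
    omega

lemma degG2 (d : ℕ) (hd : 0 < d) : Degenerate (BG d R2) d := by
  apply bg_deg d hd R2 rho2 tau2
  · intro b c hb hc
    interval_cases b <;> interval_cases c <;> decide
  · intro b c hb hc
    interval_cases b <;> interval_cases c <;> decide

lemma degG3 (d : ℕ) (hd : 0 < d) : Degenerate (BG d R3) d := by
  apply bg_deg d hd R3 rho3 tau3
  · intro b c hb hc
    interval_cases b <;> interval_cases c <;> decide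
  · intro b c hb hc
    interval_cases b <;> interval_cases c <;> decide


/-- For every positive `d`, there are three `d`-degenerate graphs on `5d` vertices
whose union is the complete graph `K_{5d}`. -/
theorem statement11 (d : ℕ) (hd : 0 < d) :
    ∃ G1 G2 G3 : SimpleGraph (Fin (5 * d)),
      Degenerate G1 d ∧ Degenerate G2 d ∧ Degenerate G3 d ∧ G1 ⊔ G2 ⊔ G3 = ⊤ := by
  refine ⟨BG d R1, BG d R2, BG d R3, degG1 d hd, degG2 d hd, degG3 d hd, ?_⟩
  ext u v
  simp only [SimpleGraph.sup_adj, SimpleGraph.top_adj, BG_adj, ne_eq, Fin.ext_iff]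
  have h5u : u.val / d < 5 := (Nat.div_lt_iff_lt_mul hd).mpr u.isLt
  have h5v : v.val / d < 5 := (Nat.div_lt_iff_lt_mul hd).mpr v.isLt
  constructor
  · rintro ((⟨h, -⟩ | ⟨h, -⟩) | ⟨h, -⟩) <;> exact h
  · intro hne
    have key : (R1 (u.val / d) (v.val / d) ∨ R1 (v.val / d) (u.val / d)) ∨
        (R2 (u.val / d) (v.val / d) ∨ R2 (v.val / d) (u.val / d)) ∨
        (R3 (u.val / d) (v.val / d) ∨ R3 (v.val / d) (u.val / d)) := by
      revert h5u h5v
      generalize u.val / d = b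
      generalize v.val / d = c
      intro h5u h5v
      interval_cases b <;> interval_cases c <;> simp [R1, R2, R3]
    rcases key with h | h | h
    · exact Or.inl (Or.inl ⟨hne, h⟩)
    · exact Or.inl (Or.inr ⟨hne, h⟩)
    · exact Or.inr ⟨hne, h⟩
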